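/- Let E and D be positive integers and define the simplified load-balancing loss L_bal(P) := ‖(1/N) Σ_{i=1}^{N} softmax(P(μ + ξ_i)) − (1/E)·𝟙‖₂² for a real E × D matrix P, μ ∈ ℝ^D, and ξ_1, …, ξ_N ∈ ℝ^D. There exists a constant C > 0, depending only on E, with the following property. For every positive integer N, every such P, μ, ξ_1, …, ξ_N with Σ_{i=1}^{N} ξ_i = 0, and every ε ∈ (0, 1], if max_{1 ≤ i ≤ N} ‖P(μ + ξ_i)‖₂ ≤ ε, then ‖Π_E P μ‖₂² ≤ E² · L_bal(P) + C ε³; in particular, any near-minimizer of L_bal must have Π_E P μ close to 0. -/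

import Mathlib

set_option maxHeartbeats 1000000


open Matrix

/-- Coordinatewise softmax on Euclidean space ℝ^E. -/
noncomputable def softmax {E : ℕ} (z : EuclideanSpace ℝ (Fin E)) : EuclideanSpace ℝ (Fin E) :=
  WithLp.toLp 2 (fun e => Real.exp (z e) / ∑ j, Real.exp (z j))

/-- The all-ones vector 𝟙 ∈ ℝ^E. -/
def onesE (E : ℕ) : EuclideanSpace ℝ (Fin E) := WithLp.toLp 2 (fun _ => 1)

/-- The orthogonal projector onto the orthogonal complement of the all-ones vector:
`Π_E = I_E - (1/E) 𝟙𝟙ᵀ`. -/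
noncomputable def projE (E : ℕ) : Matrix (Fin E) (Fin E) ℝ :=
  1 - (E : ℝ)⁻¹ • vecMulVec (fun _ => 1) (fun _ => 1)

/-- Matrix acting on Euclidean space vectors. -/
noncomputable def matApp {E D : ℕ} (P : Matrix (Fin E) (Fin D) ℝ)
    (x : EuclideanSpace ℝ (Fin D)) : EuclideanSpace ℝ (Fin E) :=
  Matrix.toEuclideanLin P x

/-- The simplified load-balancing loss
`L_bal(P) = ‖(1/N) Σᵢ softmax(P(μ + ξᵢ)) − (1/E)𝟙‖₂²`. -/
noncomputable def Lbal {E D N : ℕ} (P : Matrix (Fin E) (Fin D) ℝ)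
    (μ : EuclideanSpace ℝ (Fin D)) (ξ : Fin N → EuclideanSpace ℝ (Fin D)) : ℝ :=
  ‖(N : ℝ)⁻¹ • (∑ i, softmax (matApp P (μ + ξ i))) - (E : ℝ)⁻¹ • onesE E‖ ^ 2

/- ## Auxiliary lemmas -/

lemma euc_abs_le {E : ℕ} (x : EuclideanSpace ℝ (Fin E)) (e : Fin E) : |x e| ≤ ‖x‖ := by
  rw [EuclideanSpace.norm_eq, show |x e| = Real.sqrt ((x e)^2) from (Real.sqrt_sq_eq_abs _).symm]
  apply Real.sqrt_le_sqrt
  have h := Finset.single_le_sum (f := fun j => ‖x j‖^2) (fun j _ => by positivity)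
    (Finset.mem_univ e)
  simpa [Real.norm_eq_abs, sq_abs] using h

lemma euc_norm_sq_eq {E : ℕ} (x : EuclideanSpace ℝ (Fin E)) : ‖x‖^2 = ∑ j, (x j)^2 := by
  rw [EuclideanSpace.norm_eq, Real.sq_sqrt (by positivity)]
  simp [Real.norm_eq_abs, sq_abs]

lemma euc_norm_le_sqrt_mul {E : ℕ} (x : EuclideanSpace ℝ (Fin E)) {B : ℝ} (hB : 0 ≤ B)
    (h : ∀ e, |x e| ≤ B) : ‖x‖ ≤ Real.sqrt E * B := by
  rw [EuclideanSpace.norm_eq]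
  have hsum : ∑ i, ‖x i‖^2 ≤ (E : ℝ) * B^2 := by
    calc ∑ i, ‖x i‖^2 ≤ ∑ _i : Fin E, B^2 := by
          refine Finset.sum_le_sum fun i _ => ?_
          have := h i
          rw [Real.norm_eq_abs]
          nlinarith [abs_nonneg (x i)]
      _ = (E : ℝ) * B^2 := by simp [Finset.sum_const, nsmul_eq_mul]
  calc Real.sqrt (∑ i, ‖x i‖^2) ≤ Real.sqrt ((E : ℝ) * B^2) := Real.sqrt_le_sqrt hsum
    _ = Real.sqrt E * B := by
        rw [Real.sqrt_mul (by positivity), Real.sqrt_sq hB]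

lemma matApp_apply {E D : ℕ} (P : Matrix (Fin E) (Fin D) ℝ) (x : EuclideanSpace ℝ (Fin D))
    (e : Fin E) : matApp P x e = ∑ j, P e j * x j := by
  simp [matApp, Matrix.toEuclideanLin, Matrix.toLin'_apply, Matrix.mulVec, dotProduct]

lemma projE_apply {E : ℕ} (z : EuclideanSpace ℝ (Fin E)) (e : Fin E) :
    matApp (projE E) z e = z e - (E : ℝ)⁻¹ * ∑ j, z j := by
  rw [matApp_apply]
  simp only [projE, Matrix.sub_apply, Matrix.one_apply, Matrix.smul_apply,
    Matrix.vecMulVec_apply, smul_eq_mul, mul_one, sub_mul, ite_mul, one_mul, zero_mul,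
    Finset.sum_sub_distrib, Finset.sum_ite_eq, Finset.mem_univ, if_true, Finset.mul_sum]

/-- Second order expansion of softmax, coordinatewise. -/
lemma softmax_key {E : ℕ} (hE : 0 < E) (z : EuclideanSpace ℝ (Fin E)) (hz : ‖z‖ ≤ 1)
    (e : Fin E) :
    |softmax z e - (E:ℝ)⁻¹ - (E:ℝ)⁻¹ * (z e - (E:ℝ)⁻¹ * ∑ j, z j)| ≤
      (9*(E:ℝ)^2 + 9*E)/(E:ℝ)^3 * ‖z‖^2 := by
  have hE1 : (1:ℝ) ≤ E := by exact_mod_cast hE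
  have hE0 : (0:ℝ) < E := by positivity
  set n := ‖z‖ with hn
  have hn0 : 0 ≤ n := norm_nonneg z
  have hco : ∀ j, |z j| ≤ n := fun j => euc_abs_le z j
  have hco1 : ∀ j, |z j| ≤ 1 := fun j => (hco j).trans hz
  have hsq : ∑ j, (z j)^2 = n^2 := (euc_norm_sq_eq z).symm
  set r : Fin E → ℝ := fun j => Real.exp (z j) - 1 - z j with hrdef
  have hr : ∀ j, |r j| ≤ (z j)^2 := fun j => Real.abs_exp_sub_one_sub_id_le (hco1 j)
  set Z := ∑ j, z j with hZdef
  set R := ∑ j, r j with hRdef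
  have hZ : |Z| ≤ E * n := by
    calc |Z| ≤ ∑ j, |z j| := Finset.abs_sum_le_sum_abs _ _
      _ ≤ ∑ _j : Fin E, n := Finset.sum_le_sum fun j _ => hco j
      _ = E * n := by simp [Finset.sum_const, nsmul_eq_mul]
  have hR : |R| ≤ n^2 := by
    calc |R| ≤ ∑ j, |r j| := Finset.abs_sum_le_sum_abs _ _
      _ ≤ ∑ j, (z j)^2 := Finset.sum_le_sum fun j _ => hr j
      _ = n^2 := hsq
  set S := ∑ j, Real.exp (z j) with hSdef
  have hS : S = E + Z + R := by
    have h1 : ∀ j, Real.exp (z j) = 1 + z j + r j := fun j => by simp [hrdef]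
    calc S = ∑ j, (1 + z j + r j) := Finset.sum_congr rfl fun j _ => h1 j
      _ = (E : ℝ) + Z + R := by
          rw [Finset.sum_add_distrib, Finset.sum_add_distrib]
          simp [Finset.sum_const, nsmul_eq_mul, hZdef, hRdef]
  have hS3 : (E:ℝ)/3 ≤ S := by
    have h3 : ∀ j, (1:ℝ)/3 ≤ Real.exp (z j) := by
      intro j
      have hzj : (-1:ℝ) ≤ z j := neg_le_of_abs_le (hco1 j)
      have h4 : Real.exp (-1) ≤ Real.exp (z j) := Real.exp_le_exp.mpr hzj
      have he : (1:ℝ)/3 ≤ Real.exp (-1) := by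
        rw [Real.exp_neg, one_div]
        apply inv_anti₀ (Real.exp_pos 1)
        exact Real.exp_one_lt_d9.le.trans (by norm_num)
      linarith
    calc (E:ℝ)/3 = ∑ _j : Fin E, (1:ℝ)/3 := by
          simp [Finset.sum_const, nsmul_eq_mul]; ring
      _ ≤ S := Finset.sum_le_sum fun j _ => h3 j
  have hSpos : 0 < S := lt_of_lt_of_le (by positivity) hS3
  have hSne : S ≠ 0 := ne_of_gt hSpos
  have hEZR : (E:ℝ) + Z + R ≠ 0 := hS ▸ hSne
  have hkey : softmax z e - (E:ℝ)⁻¹ - (E:ℝ)⁻¹ * (z e - (E:ℝ)⁻¹ * Z)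
      = ((E:ℝ)^2 * r e - E * R - (Z + R)*(E * z e - Z)) / ((E:ℝ)^2 * S) := by
    have hw : Real.exp (z e) = 1 + z e + r e := by simp [hrdef]
    have hsm : softmax z e = (1 + z e + r e) / S := by
      simp only [softmax, PiLp.toLp_apply]
      rw [← hSdef, hw]
    rw [hsm, hS]
    field_simp
    ring
  rw [hkey, abs_div]
  have habs_den : |(E:ℝ)^2 * S| = (E:ℝ)^2 * S := abs_of_pos (by positivity)
  have hden : (E:ℝ)^3/3 ≤ (E:ℝ)^2 * S := by nlinarith [hS3]
  have hre : |r e| ≤ n^2 := by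
    refine (hr e).trans ?_
    nlinarith [hco e, abs_nonneg (z e), sq_abs (z e)]
  have hze : |z e| ≤ n := hco e
  have hZR : |Z + R| ≤ E*n + n^2 := (abs_add_le _ _).trans (add_le_add hZ hR)
  have hEzZ : |(E:ℝ) * z e - Z| ≤ E*n + E*n := by
    refine (abs_sub _ _).trans (add_le_add ?_ hZ)
    rw [abs_mul, abs_of_pos hE0]
    exact mul_le_mul_of_nonneg_left hze hE0.le
  have hnum : |(E:ℝ)^2 * r e - E * R - (Z + R)*(E * z e - Z)| ≤ (3*(E:ℝ)^2 + 3*E) * n^2 := by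
    have t1 : |(E:ℝ)^2 * r e| ≤ (E:ℝ)^2 * n^2 := by
      rw [abs_mul, abs_of_pos (by positivity : (0:ℝ) < (E:ℝ)^2)]
      exact mul_le_mul_of_nonneg_left hre (by positivity)
    have t2 : |(E:ℝ) * R| ≤ (E:ℝ) * n^2 := by
      rw [abs_mul, abs_of_pos hE0]
      exact mul_le_mul_of_nonneg_left hR hE0.le
    have t3 : |(Z + R)*((E:ℝ) * z e - Z)| ≤ (E*n + n^2) * (E*n + E*n) := by
      rw [abs_mul]
      exact mul_le_mul hZR hEzZ (abs_nonneg _) (by positivity)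
    calc |(E:ℝ)^2 * r e - E * R - (Z + R)*(E * z e - Z)|
        ≤ |(E:ℝ)^2 * r e - E * R| + |(Z + R)*(E * z e - Z)| := abs_sub _ _
      _ ≤ (|(E:ℝ)^2 * r e| + |(E:ℝ) * R|) + |(Z + R)*(E * z e - Z)| :=
          add_le_add (abs_sub _ _) le_rfl
      _ ≤ ((E:ℝ)^2 * n^2 + (E:ℝ) * n^2) + (E*n + n^2) * (E*n + E*n) :=
          add_le_add (add_le_add t1 t2) t3
      _ ≤ (3*(E:ℝ)^2 + 3*E) * n^2 := by nlinarith [hn0, hz, hE1, mul_nonneg (mul_nonneg (sub_nonneg.mpr hz) (sq_nonneg n)) hE0.le]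
  rw [habs_den]
  calc |(E:ℝ)^2 * r e - E * R - (Z + R)*(E * z e - Z)| / ((E:ℝ)^2 * S)
      ≤ ((3*(E:ℝ)^2 + 3*E) * n^2) / ((E:ℝ)^3/3) :=
        div_le_div₀ (by positivity) hnum (by positivity) hden
    _ = (9*(E:ℝ)^2 + 9*E)/(E:ℝ)^3 * n^2 := by
        field_simp
        ring

/-- Vector form of the softmax expansion. -/
lemma softmax_keyvec {E : ℕ} (hE : 0 < E) (z : EuclideanSpace ℝ (Fin E)) (hz : ‖z‖ ≤ 1) :
    ‖softmax z - (E:ℝ)⁻¹ • onesE E - (E:ℝ)⁻¹ • matApp (projE E) z‖ ≤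
      (Real.sqrt E * ((9*(E:ℝ)^2 + 9*E)/(E:ℝ)^3)) * ‖z‖^2 := by
  have hE0 : (0:ℝ) < E := by exact_mod_cast hE
  rw [mul_assoc]
  apply euc_norm_le_sqrt_mul _ (by positivity)
  intro e
  have h := softmax_key hE z hz e
  have happ : (softmax z - (E:ℝ)⁻¹ • onesE E - (E:ℝ)⁻¹ • matApp (projE E) z) e
      = softmax z e - (E:ℝ)⁻¹ - (E:ℝ)⁻¹ * (z e - (E:ℝ)⁻¹ * ∑ j, z j) := by
    simp only [PiLp.sub_apply, PiLp.smul_apply, smul_eq_mul, projE_apply, onesE, PiLp.toLp_apply, mul_one]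
  rw [happ]
  exact h

lemma proj_norm_le {E : ℕ} (hE : 0 < E) (z : EuclideanSpace ℝ (Fin E)) :
    ‖matApp (projE E) z‖ ≤ Real.sqrt E * (2 * ‖z‖) := by
  have hE0 : (0:ℝ) < E := by exact_mod_cast hE
  apply euc_norm_le_sqrt_mul _ (by positivity)
  intro e
  rw [projE_apply]
  have h1 : |z e| ≤ ‖z‖ := euc_abs_le z e
  have h2 : |∑ j, z j| ≤ (E:ℝ) * ‖z‖ := by
    calc |∑ j, z j| ≤ ∑ j, |z j| := Finset.abs_sum_le_sum_abs _ _
      _ ≤ ∑ _j : Fin E, ‖z‖ := Finset.sum_le_sum fun j _ => euc_abs_le z j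
      _ = (E:ℝ) * ‖z‖ := by simp [Finset.sum_const, nsmul_eq_mul]
  calc |z e - (E:ℝ)⁻¹ * ∑ j, z j| ≤ |z e| + |(E:ℝ)⁻¹ * ∑ j, z j| := abs_sub _ _
    _ ≤ ‖z‖ + (E:ℝ)⁻¹ * ((E:ℝ) * ‖z‖) := by
        refine add_le_add h1 ?_
        rw [abs_mul, abs_of_pos (by positivity : (0:ℝ) < (E:ℝ)⁻¹)]
        exact mul_le_mul_of_nonneg_left h2 (by positivity)
    _ = 2 * ‖z‖ := by field_simp; ring

theorem stmt10 (E D : ℕ) (hE : 0 < E) (hD : 0 < D) :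
    ∃ C > (0 : ℝ),
      ∀ (N : ℕ), 0 < N →
      ∀ (P : Matrix (Fin E) (Fin D) ℝ) (μ : EuclideanSpace ℝ (Fin D))
        (ξ : Fin N → EuclideanSpace ℝ (Fin D)), (∑ i, ξ i) = 0 →
      ∀ ε : ℝ, 0 < ε → ε ≤ 1 →
      (∀ i : Fin N, ‖matApp P (μ + ξ i)‖ ≤ ε) →
      ‖matApp (projE E) (matApp P μ)‖ ^ 2 ≤ (E : ℝ) ^ 2 * Lbal P μ ξ + C * ε ^ 3 := by
  have hE1 : (1:ℝ) ≤ E := by exact_mod_cast hE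
  have hE0 : (0:ℝ) < E := by positivity
  set c : ℝ := (9*(E:ℝ)^2 + 9*E)/(E:ℝ)^3 with hc
  have hc0 : 0 < c := by positivity
  have hsE : 0 < Real.sqrt E := Real.sqrt_pos.mpr hE0
  set M : ℝ := Real.sqrt E * c with hMdef
  have hM0 : 0 < M := mul_pos hsE hc0
  set K : ℝ := M + 2 * Real.sqrt E with hKdef
  have hK0 : 0 < K := by positivity
  refine ⟨2*(E:ℝ)^2*K*((E:ℝ)*M) + ((E:ℝ)*M)^2 + 1, ?_, ?_⟩
  · have h1 : 0 < 2*(E:ℝ)^2*K*((E:ℝ)*M) :=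
      mul_pos (mul_pos (mul_pos (by norm_num) (pow_pos hE0 2)) hK0) (mul_pos hE0 hM0)
    nlinarith [sq_nonneg ((E:ℝ)*M)]
  intro N hN P μ ξ hξ ε hε0 hε1 hεb
  have hNne : (N:ℝ) ≠ 0 := Nat.cast_ne_zero.mpr hN.ne'
  set z : Fin N → EuclideanSpace ℝ (Fin E) := fun i => matApp P (μ + ξ i) with hzdef
  set v : EuclideanSpace ℝ (Fin E) := matApp P μ with hvdef
  have hz1 : ∀ i, ‖z i‖ ≤ 1 := fun i => (hεb i).trans hε1
  have hsum : ∑ i, z i = (N:ℝ) • v := by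
    have h1 : ∀ i, z i = v + matApp P (ξ i) := fun i => by
      simp only [hzdef, hvdef, matApp, map_add]
    rw [Finset.sum_congr rfl fun i _ => h1 i, Finset.sum_add_distrib]
    have h0 : ∑ i, matApp P (ξ i) = 0 := by
      simp only [matApp]
      rw [← map_sum, hξ, map_zero]
    rw [h0, add_zero, Finset.sum_const, Finset.card_univ, Fintype.card_fin,
      ← Nat.cast_smul_eq_nsmul ℝ]
  set A : EuclideanSpace ℝ (Fin E) :=
    (N:ℝ)⁻¹ • (∑ i, softmax (z i)) - (E:ℝ)⁻¹ • onesE E with hAdef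
  have hLb : Lbal P μ ξ = ‖A‖^2 := rfl
  set f : Fin N → EuclideanSpace ℝ (Fin E) :=
    fun i => softmax (z i) - (E:ℝ)⁻¹ • onesE E - (E:ℝ)⁻¹ • matApp (projE E) (z i) with hfdef
  have hfb : ∀ i, ‖f i‖ ≤ M * ε^2 := by
    intro i
    have h1 := softmax_keyvec hE (z i) (hz1 i)
    refine h1.trans ?_
    have h2 : ‖z i‖^2 ≤ ε^2 := by
      have := hεb i
      nlinarith [norm_nonneg (z i)]
    rw [← hc, ← hMdef]
    exact mul_le_mul_of_nonneg_left h2 hM0.le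
  have hPsum : ∑ i, matApp (projE E) (z i) = (N:ℝ) • matApp (projE E) v := by
    simp only [matApp]
    rw [← map_sum, hsum]
    exact _root_.map_smul _ _ _
  have hdecomp : A = (N:ℝ)⁻¹ • (∑ i, f i) + (E:ℝ)⁻¹ • matApp (projE E) v := by
    have e1 : ∑ i, f i = (∑ i, softmax (z i)) - (N:ℝ) • ((E:ℝ)⁻¹ • onesE E)
        - (E:ℝ)⁻¹ • ((N:ℝ) • matApp (projE E) v) := by
      simp only [hfdef]
      rw [Finset.sum_sub_distrib, Finset.sum_sub_distrib, Finset.sum_const,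
        Finset.card_univ, Fintype.card_fin, ← Finset.smul_sum, hPsum,
        ← Nat.cast_smul_eq_nsmul ℝ]
    have e2 : (N:ℝ)⁻¹ • ((N:ℝ) • ((E:ℝ)⁻¹ • onesE E)) = (E:ℝ)⁻¹ • onesE E := by
      rw [smul_smul, inv_mul_cancel₀ hNne, one_smul]
    have e3 : (N:ℝ)⁻¹ • ((E:ℝ)⁻¹ • ((N:ℝ) • matApp (projE E) v))
        = (E:ℝ)⁻¹ • matApp (projE E) v := by
      rw [smul_smul, smul_smul]
      congr 1
      field_simp
    rw [e1, smul_sub, smul_sub, e2, e3, hAdef]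
    abel
  have hg : matApp (projE E) v = (E:ℝ) • A - (E:ℝ) • ((N:ℝ)⁻¹ • ∑ i, f i) := by
    rw [hdecomp, smul_add, smul_smul (E:ℝ) (E:ℝ)⁻¹, mul_inv_cancel₀ hE0.ne', one_smul]
    abel
  have hterm : ∀ i, ‖softmax (z i) - (E:ℝ)⁻¹ • onesE E‖ ≤ K * ε := by
    intro i
    have h1 : softmax (z i) - (E:ℝ)⁻¹ • onesE E
        = f i + (E:ℝ)⁻¹ • matApp (projE E) (z i) := by
      simp only [hfdef]; abel
    rw [h1]
    have h2 : ‖(E:ℝ)⁻¹ • matApp (projE E) (z i)‖ ≤ (E:ℝ)⁻¹ * (Real.sqrt E * (2 * ε)) := by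
      rw [norm_smul, Real.norm_eq_abs, abs_of_pos (by positivity : (0:ℝ) < (E:ℝ)⁻¹)]
      refine mul_le_mul_of_nonneg_left ?_ (by positivity)
      refine (proj_norm_le hE (z i)).trans ?_
      have := hεb i
      nlinarith [hsE]
    calc ‖f i + (E:ℝ)⁻¹ • matApp (projE E) (z i)‖
        ≤ ‖f i‖ + ‖(E:ℝ)⁻¹ • matApp (projE E) (z i)‖ := norm_add_le _ _
      _ ≤ M * ε^2 + (E:ℝ)⁻¹ * (Real.sqrt E * (2 * ε)) := add_le_add (hfb i) h2
      _ ≤ K * ε := by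
          rw [hKdef]
          have hinv : (E:ℝ)⁻¹ ≤ 1 := by
            rw [inv_le_one_iff₀]; right; exact hE1
          nlinarith [mul_nonneg hM0.le (mul_nonneg hε0.le (sub_nonneg.mpr hε1)),
            mul_nonneg (mul_nonneg (sub_nonneg.mpr hinv) hsE.le) hε0.le]
  have hA2 : A = (N:ℝ)⁻¹ • ∑ i, (softmax (z i) - (E:ℝ)⁻¹ • onesE E) := by
    rw [Finset.sum_sub_distrib, Finset.sum_const, Finset.card_univ, Fintype.card_fin,
      ← Nat.cast_smul_eq_nsmul ℝ, smul_sub, smul_smul, inv_mul_cancel₀ hNne, one_smul, hAdef]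
  have hsum_norm : ∀ (g : Fin N → EuclideanSpace ℝ (Fin E)) (B : ℝ),
      (∀ i, ‖g i‖ ≤ B) → ‖(N:ℝ)⁻¹ • ∑ i, g i‖ ≤ B := by
    intro g B hg'
    rw [norm_smul, Real.norm_eq_abs, abs_of_pos (by positivity : (0:ℝ) < (N:ℝ)⁻¹)]
    have h1 : ‖∑ i, g i‖ ≤ (N:ℝ) * B := by
      calc ‖∑ i, g i‖ ≤ ∑ i, ‖g i‖ := norm_sum_le _ _
        _ ≤ ∑ _i : Fin N, B := Finset.sum_le_sum fun i _ => hg' i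
        _ = (N:ℝ) * B := by simp [Finset.sum_const, nsmul_eq_mul]
    calc (N:ℝ)⁻¹ * ‖∑ i, g i‖ ≤ (N:ℝ)⁻¹ * ((N:ℝ) * B) :=
          mul_le_mul_of_nonneg_left h1 (by positivity)
      _ = B := by field_simp
  have hAn : ‖A‖ ≤ K * ε := by
    rw [hA2]
    exact hsum_norm _ _ hterm
  have hfs : ‖(N:ℝ)⁻¹ • ∑ i, f i‖ ≤ M * ε^2 := hsum_norm _ _ hfb
  have hgn : ‖matApp (projE E) v‖ ≤ (E:ℝ) * ‖A‖ + (E:ℝ) * (M * ε^2) := by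
    rw [hg]
    calc ‖(E:ℝ) • A - (E:ℝ) • ((N:ℝ)⁻¹ • ∑ i, f i)‖
        ≤ ‖(E:ℝ) • A‖ + ‖(E:ℝ) • ((N:ℝ)⁻¹ • ∑ i, f i)‖ := norm_sub_le _ _
      _ ≤ (E:ℝ) * ‖A‖ + (E:ℝ) * (M * ε^2) := by
          rw [norm_smul, norm_smul, Real.norm_eq_abs, abs_of_pos hE0]
          exact add_le_add le_rfl (mul_le_mul_of_nonneg_left hfs hE0.le)
  have h2 : ‖matApp (projE E) v‖^2 ≤ ((E:ℝ) * ‖A‖ + (E:ℝ) * (M * ε^2))^2 :=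
    pow_le_pow_left₀ (norm_nonneg _) hgn 2
  rw [hLb]
  have hcube : ε^4 ≤ ε^3 := by nlinarith [mul_nonneg (pow_pos hε0 3).le (sub_nonneg.mpr hε1)]
  have hcross : ‖A‖ * ε^2 ≤ K * ε^3 := by
    nlinarith [mul_le_mul_of_nonneg_right hAn (sq_nonneg ε)]
  have hEM : (0:ℝ) ≤ 2*(E:ℝ)^2*M := mul_nonneg (by positivity) hM0.le
  have h5 : 2*(E:ℝ)^2*M*(‖A‖*ε^2) ≤ 2*(E:ℝ)^2*M*(K*ε^3) :=
    mul_le_mul_of_nonneg_left hcross hEM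
  have h6 : 2*(E:ℝ)^2*M*(K*ε^3) ≤ 2*(E:ℝ)^2*K*((E:ℝ)*M)*ε^3 := by
    nlinarith [mul_nonneg (sub_nonneg.mpr hE1)
      (mul_nonneg (mul_nonneg hK0.le hM0.le) (pow_pos hε0 3).le), pow_pos hE0 2]
  have h7 : ((E:ℝ)*M)^2*ε^4 ≤ ((E:ℝ)*M)^2*ε^3 := mul_le_mul_of_nonneg_left hcube (sq_nonneg _)
  nlinarith [h2, h5, h6, h7, pow_pos hε0 3]
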